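/- Let T be a tree with no uncountable chains, and let 𝒜 be an uncountable collection of pairwise disjoint nonempty finite subsets of T. Then there exist distinct a, b ∈ 𝒜 such that every x ∈ a is incomparable with every y ∈ b. -/

import Mathlib

universe u

/-- A partial order is a tree if the set of strict predecessors of every point
is well-ordered by `<`. -/
def IsTree (T : Type u) [PartialOrder T] : Prop :=
  ∀ x : T, IsWellOrder {y : T // y < x} (fun a b => (a : T) < (b : T))

set_option linter.unusedSectionVars false
set_option linter.unusedVariables false

namespace Stmt19

variable {T : Type u} [PartialOrder T]

/-- points below a common point are comparable -/
lemma below_comp (hT : IsTree T) {x y z : T} (hy : y ≤ x) (hz : z ≤ x) :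
    y ≤ z ∨ z ≤ y := by
  rcases eq_or_lt_of_le hy with rfl | hy'
  · exact Or.inr hz
  rcases eq_or_lt_of_le hz with rfl | hz'
  · exact Or.inl hy
  have htr := (hT x).toTrichotomous
  rcases @trichotomous _ _ htr ⟨y, hy'⟩ ⟨z, hz'⟩ with h | h | h
  · exact Or.inl h.le
  · exact Or.inl (le_of_eq (congrArg Subtype.val h))
  · exact Or.inr h.le

def blw (x : T) : Set T := {y | y ≤ x}

lemma blw_countable (hT : IsTree T)
    (hchain : ∀ C : Set T, IsChain (· ≤ ·) C → C.Countable) (x : T) :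
    (blw x).Countable := by
  apply hchain
  intro a ha b hb _
  exact below_comp hT ha hb

def meets (H : Set (Set T)) (S : Set T) : Set (Set T) := {a ∈ H | (a ∩ S).Nonempty}

lemma meets_countable {H : Set (Set T)} (hH : H.Pairwise Disjoint)
    {S : Set T} (hS : S.Countable) : (meets H S).Countable := by
  classical
  haveI := hS.to_subtype
  rw [← Set.countable_coe_iff]
  have : ∀ a : meets H S, ∃ y : S, (y : T) ∈ (a : Set T) := by
    rintro ⟨a, ha, y, hy⟩
    exact ⟨⟨y, hy.2⟩, hy.1⟩
  choose f hf using this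
  refine Function.Injective.countable (f := f) ?_
  intro a b hab
  have h1 : (f a : T) ∈ (a : Set T) := hf a
  have h2 : (f a : T) ∈ (b : Set T) := hab ▸ hf b
  have : (a : Set T) = (b : Set T) := by
    by_contra hne
    exact Set.disjoint_left.mp (hH a.2.1 b.2.1 hne) h1 h2
  exact Subtype.ext this

lemma not_countable_mono {A B : Set (Set T)} (hAB : A ⊆ B) (hA : ¬ A.Countable) :
    ¬ B.Countable := fun h => hA (h.mono hAB)

lemma not_countable_diff {A B : Set (Set T)} (hA : ¬ A.Countable) (hB : B.Countable) :
    ¬ (A \ B).Countable := by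
  intro h
  exact hA ((h.union hB).mono (by intro a ha; by_cases h : a ∈ B
                                  · exact Or.inr h
                                  · exact Or.inl ⟨ha, h⟩))

lemma nonempty_of_not_countable {A : Set (Set T)} (hA : ¬ A.Countable) : A.Nonempty := by
  rcases Set.eq_empty_or_nonempty A with rfl | h
  · exact absurd Set.countable_empty hA
  · exact h

/-- key tree fact: if `y` is comparable with some `x > u`, then `y ≤ u` or `u < y`. -/
lemma link_avoid (hT : IsTree T) {u x y : T} (hux : u < x) (hxy : x ≤ y ∨ y ≤ x)
    (h1 : ¬ y ≤ u) (h2 : ¬ u < y) : False := by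
  rcases hxy with h | h
  · exact h2 (lt_of_lt_of_le hux h)
  · rcases below_comp hT h hux.le with h' | h'
    · exact h1 h'
    · rcases eq_or_lt_of_le h' with rfl | h''
      · exact h1 le_rfl
      · exact h2 h''

lemma no_two_cones (hT : IsTree T) {r u x : T} (hru : ¬ r ≤ u) (hur : ¬ u ≤ r)
    (h1 : r < x) (h2 : u < x) : False := by
  rcases below_comp hT h1.le h2.le with h | h
  · exact hru h
  · exact hur h

lemma card_roots_le (hT : IsTree T) {R : Finset T}
    (hR : ∀ r ∈ R, ∀ r' ∈ R, r ≠ r' → ¬ r ≤ r' ∧ ¬ r' ≤ r)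
    {a : Set T} (ha : a.Finite) (hα : ∀ r ∈ R, ∃ x ∈ a, r < x) :
    R.card ≤ a.ncard := by
  classical
  have : ∀ r : T, ∃ x, r ∈ R → x ∈ a ∧ r < x := by
    intro r
    by_cases hr : r ∈ R
    · obtain ⟨x, hx, hrx⟩ := hα r hr
      exact ⟨x, fun _ => ⟨hx, hrx⟩⟩
    · exact ⟨r, fun h => absurd h hr⟩
  choose f hf using this
  rw [Set.ncard_eq_toFinset_card a ha]
  refine Finset.card_le_card_of_injOn f (fun r hr => ?_) ?_
  · simp only [Finset.mem_coe, Set.Finite.mem_toFinset]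
    exact (hf r hr).1
  · intro r hr r' hr' hEq
    simp only [Finset.mem_coe] at hr hr'
    by_contra hne
    rcases hR r hr r' hr' hne with ⟨h1, h2⟩
    exact no_two_cones hT h1 h2 (hf r hr).2 (hEq ▸ (hf r' hr').2)

def cone (H : Set (Set T)) (w : T) : Set (Set T) := {a ∈ H | ∃ x ∈ a, w < x}

def red (w : T) (a : Set T) : Set T := {x ∈ a | ¬ w < x}

lemma red_subset (w : T) (a : Set T) : red w a ⊆ a := fun _ hx => hx.1

lemma fat_of_mem (hT : IsTree T)
    (hchain : ∀ C : Set T, IsChain (· ≤ ·) C → C.Countable)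
    {G : Set (Set T)} (hGd : G.Pairwise Disjoint) (hUG : ¬ G.Countable)
    {a₀ : Set T} (hfin : a₀.Finite)
    (hlink : ∀ b ∈ G, ∃ x ∈ a₀, ∃ y ∈ b, x ≤ y ∨ y ≤ x) :
    ∃ x ∈ a₀, ¬ (cone G x).Countable := by
  by_contra h
  push_neg at h
  apply hUG
  have hlow : (⋃ x ∈ a₀, blw x).Countable :=
    hfin.countable.biUnion (fun x _ => blw_countable hT hchain x)
  have hsub : G ⊆ meets G (⋃ x ∈ a₀, blw x) ∪ ⋃ x ∈ a₀, cone G x := by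
    intro b hb
    obtain ⟨x, hx, y, hy, hcomp⟩ := hlink b hb
    rcases hcomp with hc | hc
    · rcases eq_or_lt_of_le hc with rfl | hlt
      · exact Or.inl ⟨hb, x, hy, Set.mem_biUnion hx le_rfl⟩
      · exact Or.inr (Set.mem_biUnion hx ⟨hb, y, hy, hlt⟩)
    · exact Or.inl ⟨hb, y, hy, Set.mem_biUnion hx hc⟩
  refine Set.Countable.mono hsub ?_
  exact (meets_countable hGd hlow).union
    (hfin.countable.biUnion (fun x hx => h x hx))

lemma unc_image {H : Set (Set T)} (hU : ¬ H.Countable) {f : Set T → Set T}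
    (hinj : Set.InjOn f H) : ¬ (f '' H).Countable :=
  fun h => hU (Set.countable_of_injective_of_countable_image hinj h)

lemma pairwise_image {H : Set (Set T)} (hH : H.Pairwise Disjoint)
    {f : Set T → Set T} (hsub : ∀ a ∈ H, f a ⊆ a) (hne : ∀ a ∈ H, (f a).Nonempty) :
    (f '' H).Pairwise Disjoint := by
  rintro _ ⟨a, ha, rfl⟩ _ ⟨b, hb, rfl⟩ hne'
  have hab : a ≠ b := by rintro rfl; exact hne' rfl
  exact Set.disjoint_of_subset (hsub a ha) (hsub b hb) (hH ha hb hab)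

lemma mu_shrink {s s' k k' : ℕ} (hs : s' < s) (hk : k ≤ s) :
    s' * s' + s' - k' < s * s + s - k := by
  have h1 : (s' + 1) * (s' + 1) ≤ s * s := Nat.mul_le_mul (by omega) (by omega)
  have h2 : (s' + 1) * (s' + 1) = s' * s' + s' + s' + 1 := by ring
  omega

lemma mu_conc {s k k' : ℕ} (h1 : k < k') (h2 : k' ≤ s) (h3 : 1 ≤ s) :
    s * s + s - k' < s * s + s - k := by
  have : k' ≤ s * s + s := by nlinarith
  omega

lemma split {α : Type*} {S : Set α} (hS : ¬ S.Countable) :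
    ∃ F G : Set α, F ⊆ S ∧ G ⊆ S ∧ (∀ a ∈ F, a ∉ G) ∧ ¬ F.Countable ∧ ¬ G.Countable := by
  have h0 : Cardinal.aleph0 ≤ Cardinal.mk S := by
    by_contra h
    push_neg at h
    exact hS (Cardinal.le_aleph0_iff_set_countable.mp h.le)
  have hEq : Cardinal.mk (↥S ⊕ ↥S) = Cardinal.mk ↥S := by
    rw [Cardinal.mk_sum]
    simp only [Cardinal.lift_id]
    rw [Cardinal.add_eq_self h0]
  obtain ⟨e⟩ := Cardinal.eq.mp hEq
  set g1 : ↥S → ↥S := fun a => e (Sum.inl a) with hg1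
  set g2 : ↥S → ↥S := fun a => e (Sum.inr a) with hg2
  have hinj1 : Function.Injective g1 := by
    intro a b hab
    have := e.injective hab
    exact Sum.inl_injective this
  have hinj2 : Function.Injective g2 := by
    intro a b hab
    have := e.injective hab
    exact Sum.inr_injective this
  have hkey : ∀ g : ↥S → ↥S, Function.Injective g →
      ¬ (Subtype.val '' (Set.range g)).Countable := by
    intro g hg hc
    apply hS
    have h1 : (Set.range g).Countable :=
      Set.countable_of_injective_of_countable_image
        (Subtype.val_injective.injOn) hc
    haveI := h1.to_subtype
    rw [← Set.countable_coe_iff]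
    exact Function.Injective.countable (f := fun a : ↥S => (⟨g a, Set.mem_range_self a⟩ :
      ↥(Set.range g))) (fun a b hab => hg (congrArg Subtype.val hab))
  refine ⟨Subtype.val '' (Set.range g1), Subtype.val '' (Set.range g2), ?_, ?_, ?_,
    hkey g1 hinj1, hkey g2 hinj2⟩
  · rintro x ⟨y, _, rfl⟩
    exact y.2
  · rintro x ⟨y, _, rfl⟩
    exact y.2
  · rintro x ⟨y, ⟨a, rfl⟩, rfl⟩ ⟨z, ⟨b, hb⟩, hzx⟩
    have : g1 a = g2 b := Subtype.val_injective (by rw [hb, hzx])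
    have h2 : (Sum.inl a : ↥S ⊕ ↥S) = Sum.inr b := e.injective this
    simp at h2

theorem core (hT : IsTree T)
    (hchain : ∀ C : Set T, IsChain (· ≤ ·) C → C.Countable) :
    ∀ μ : ℕ, ∀ p q : ℕ, ∀ R : Finset T, ∀ F G : Set (Set T),
      (p + q) * (p + q) + (p + q) - R.card ≤ μ →
      (∀ r ∈ R, ∀ r' ∈ R, r ≠ r' → ¬ r ≤ r' ∧ ¬ r' ≤ r) →
      F.Pairwise Disjoint → G.Pairwise Disjoint →
      (∀ a ∈ F, ∀ b ∈ G, Disjoint a b) →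
      (∀ a ∈ F ∪ G, a.Finite) → (∀ a ∈ F ∪ G, a.Nonempty) →
      (∀ a ∈ F, a.ncard ≤ p) → (∀ b ∈ G, b.ncard ≤ q) →
      (∀ a ∈ F ∪ G, ∀ r ∈ R, ∃ x ∈ a, r < x) →
      (∀ a ∈ F ∪ G, ∀ x ∈ a, ∀ r ∈ R, ¬ x ≤ r) →
      ¬ F.Countable → ¬ G.Countable →
      (∀ a ∈ F, ∀ b ∈ G, ∃ x ∈ a, ∃ y ∈ b, x ≤ y ∨ y ≤ x) →
      False := by
  intro μ
  induction μ using Nat.strong_induction_on with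
  | _ μ IH =>
  intro p q R F G hμ hR hFd hGd hFG hfin hne hcardF hcardG hα hβ hUF hUG hLink
  classical
  -- basic size facts
  obtain ⟨a₀, ha₀⟩ := nonempty_of_not_countable hUF
  obtain ⟨b₀, hb₀⟩ := nonempty_of_not_countable hUG
  have hp1 : 1 ≤ p :=
    le_trans ((Set.ncard_pos (hfin a₀ (Or.inl ha₀))).mpr (hne a₀ (Or.inl ha₀))) (hcardF a₀ ha₀)
  have hq1 : 1 ≤ q :=
    le_trans ((Set.ncard_pos (hfin b₀ (Or.inr hb₀))).mpr (hne b₀ (Or.inr hb₀))) (hcardG b₀ hb₀)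
  have hk : R.card ≤ p :=
    le_trans (card_roots_le hT hR (hfin a₀ (Or.inl ha₀))
      (fun r hr => hα a₀ (Or.inl ha₀) r hr)) (hcardF a₀ ha₀)
  have hks : R.card ≤ p + q := le_trans hk (Nat.le_add_right p q)
  -- the recursive call
  have CALL : ∀ p' q' : ℕ, ∀ R'' : Finset T, ∀ F' G' : Set (Set T),
      (p' + q') * (p' + q') + (p' + q') - R''.card <
        (p + q) * (p + q) + (p + q) - R.card →
      (∀ r ∈ R'', ∀ r' ∈ R'', r ≠ r' → ¬ r ≤ r' ∧ ¬ r' ≤ r) →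
      F'.Pairwise Disjoint → G'.Pairwise Disjoint →
      (∀ a ∈ F', ∀ b ∈ G', Disjoint a b) →
      (∀ a ∈ F' ∪ G', a.Finite) → (∀ a ∈ F' ∪ G', a.Nonempty) →
      (∀ a ∈ F', a.ncard ≤ p') → (∀ b ∈ G', b.ncard ≤ q') →
      (∀ a ∈ F' ∪ G', ∀ r ∈ R'', ∃ x ∈ a, r < x) →
      (∀ a ∈ F' ∪ G', ∀ x ∈ a, ∀ r ∈ R'', ¬ x ≤ r) →
      ¬ F'.Countable → ¬ G'.Countable →
      (∀ a ∈ F', ∀ b ∈ G', ∃ x ∈ a, ∃ y ∈ b, x ≤ y ∨ y ≤ x) → False := by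
    intro p' q' R'' F' G' hlt h1 h2 h3 h4 h5 h6 h7 h8 h9 h10 h11 h12 h13
    exact IH _ (lt_of_lt_of_le hlt hμ) p' q' R'' F' G' le_rfl
      h1 h2 h3 h4 h5 h6 h7 h8 h9 h10 h11 h12 h13
  -- the set of fat nodes
  set GF : Set T := {x | (∃ a ∈ F, x ∈ a) ∧ ¬ (cone G x).Countable} with hGFdef
  have hserve : ∀ a ∈ F, ∃ x ∈ a, x ∈ GF := by
    intro a ha
    obtain ⟨x, hx, hfat⟩ := fat_of_mem hT hchain hGd hUG (hfin a (Or.inl ha)) (hLink a ha)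
    exact ⟨x, hx, ⟨a, ha, hx⟩, hfat⟩
  have hGFc : ¬ GF.Countable := by
    intro hc
    apply hUF
    have hsub : F ⊆ meets F GF := by
      intro a ha
      obtain ⟨x, hx1, hx2⟩ := hserve a ha
      exact ⟨ha, x, hx1, hx2⟩
    exact (meets_countable hFd hc).mono hsub
  -- some piece of GF is not a chain
  have hpieces : ¬ (IsChain (· ≤ ·) {x ∈ GF | ∀ r ∈ R, ¬ r < x} ∧
      ∀ r ∈ R, IsChain (· ≤ ·) {x ∈ GF | r < x}) := by
    rintro ⟨h1, h2⟩
    apply hGFc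
    have hsub : GF ⊆ {x ∈ GF | ∀ r ∈ R, ¬ r < x} ∪ ⋃ r ∈ R, {x ∈ GF | r < x} := by
      intro x hx
      by_cases h : ∀ r ∈ R, ¬ r < x
      · exact Or.inl ⟨hx, h⟩
      · push_neg at h
        obtain ⟨r, hr, hrx⟩ := h
        exact Or.inr (Set.mem_biUnion hr ⟨hx, hrx⟩)
    exact Set.Countable.mono hsub ((hchain _ h1).union
      (Set.Countable.biUnion R.countable_toSet (fun r hr => hchain _ (h2 r hr))))
  have hnotchain : ∀ S : Set T, ¬ IsChain (· ≤ ·) S →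
      ∃ x ∈ S, ∃ y ∈ S, x ≠ y ∧ ¬ (x ≤ y ∨ y ≤ x) := by
    intro S hS
    by_contra hno
    push_neg at hno
    exact hS (fun x hx y hy hxy => hno x hx y hy hxy)
  obtain ⟨u, hu, v, hv, huvne, huvcomp, hsame⟩ :
      ∃ u, u ∈ GF ∧ ∃ v, v ∈ GF ∧ u ≠ v ∧ ¬ (u ≤ v ∨ v ≤ u) ∧
        (∀ r ∈ R, ∀ s' ∈ R, (r < u ∨ r < v) → (s' < u ∨ s' < v) → r = s') := by
    rcases not_and_or.mp hpieces with h | h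
    · obtain ⟨x, hx, y, hy, hxy, hcomp⟩ := hnotchain _ h
      refine ⟨x, hx.1, y, hy.1, hxy, hcomp, ?_⟩
      intro r hr s' hs' hru hsv
      exfalso
      rcases hru with h' | h'
      · exact hx.2 r hr h'
      · exact hy.2 r hr h'
    · push_neg at h
      obtain ⟨rh, hrh, hnc⟩ := h
      obtain ⟨x, hx, y, hy, hxy, hcomp⟩ := hnotchain _ hnc
      refine ⟨x, hx.1, y, hy.1, hxy, hcomp, ?_⟩
      have key : ∀ r ∈ R, ∀ w : T, r < w → rh < w → r = rh := by
        intro r hr w h1 h2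
        by_contra hne'
        rcases hR r hr rh hrh hne' with ⟨c1, c2⟩
        exact no_two_cones hT c1 c2 h1 h2
      intro r hr s' hs' hru hsv
      have e1 : r = rh := by
        rcases hru with h' | h'
        · exact key r hr x h' hx.2
        · exact key r hr y h' hy.2
      have e2 : s' = rh := by
        rcases hsv with h' | h'
        · exact key s' hs' x h' hx.2
        · exact key s' hs' y h' hy.2
      rw [e1, e2]
  have hfatu : ¬ (cone G u).Countable := hu.2
  have hfatv : ¬ (cone G v).Countable := hv.2
  have huv1 : ¬ u ≤ v := fun h => huvcomp (Or.inl h)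
  have huv2 : ¬ v ≤ u := fun h => huvcomp (Or.inr h)
  -- the new root set
  set R' : Finset T := R.filter (fun r => ¬ (r < u ∨ r < v)) with hR'def
  have hR'mem : ∀ r, r ∈ R' ↔ r ∈ R ∧ ¬ (r < u ∨ r < v) := by
    intro r; rw [hR'def, Finset.mem_filter]
  have hR'sub : R' ⊆ R := Finset.filter_subset _ _
  have hR'pair : ∀ r ∈ R', ∀ r' ∈ R', r ≠ r' → ¬ r ≤ r' ∧ ¬ r' ≤ r :=
    fun r hr r' hr' hne' => hR r (hR'sub hr) r' (hR'sub hr') hne'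
  have hIncompU : ∀ r ∈ R', ¬ r ≤ u ∧ ¬ u ≤ r := by
    intro r hr
    obtain ⟨hrR, hok⟩ := (hR'mem r).mp hr
    push_neg at hok
    obtain ⟨a, ha, hua⟩ := hu.1
    refine ⟨?_, hβ a (Or.inl ha) u hua r hrR⟩
    intro h
    rcases eq_or_lt_of_le h with heq | h'
    · exact hβ a (Or.inl ha) u hua r hrR (le_of_eq heq.symm)
    · exact hok.1 h'
  have hIncompV : ∀ r ∈ R', ¬ r ≤ v ∧ ¬ v ≤ r := by
    intro r hr
    obtain ⟨hrR, hok⟩ := (hR'mem r).mp hr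
    push_neg at hok
    obtain ⟨a, ha, hva⟩ := hv.1
    refine ⟨?_, hβ a (Or.inl ha) v hva r hrR⟩
    intro h
    rcases eq_or_lt_of_le h with heq | h'
    · exact hβ a (Or.inl ha) v hva r hrR (le_of_eq heq.symm)
    · exact hok.2 h'
  -- thinning
  set J : Set T := blw u ∪ blw v with hJdef
  have hJc : J.Countable := (blw_countable hT hchain u).union (blw_countable hT hchain v)
  set F0 : Set (Set T) := F \ meets F J with hF0def
  set G0 : Set (Set T) := G \ meets G J with hG0def
  have hF0U : ¬ F0.Countable := not_countable_diff hUF (meets_countable hFd hJc)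
  have hG0U : ¬ G0.Countable := not_countable_diff hUG (meets_countable hGd hJc)
  have hF0sub : F0 ⊆ F := Set.diff_subset
  have hG0sub : G0 ⊆ G := Set.diff_subset
  have hthinF : ∀ a ∈ F0, ∀ x ∈ a, ¬ x ≤ u ∧ ¬ x ≤ v := by
    rintro a ⟨haF, haJ⟩ x hx
    constructor
    · intro h; exact haJ ⟨haF, x, hx, Or.inl h⟩
    · intro h; exact haJ ⟨haF, x, hx, Or.inr h⟩
  have hthinG : ∀ b ∈ G0, ∀ y ∈ b, ¬ y ≤ u ∧ ¬ y ≤ v := by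
    rintro b ⟨hbG, hbJ⟩ y hy
    constructor
    · intro h; exact hbJ ⟨hbG, y, hy, Or.inl h⟩
    · intro h; exact hbJ ⟨hbG, y, hy, Or.inr h⟩
  set F1 : Set (Set T) := cone F0 u with hF1def
  set F2 : Set (Set T) := cone F0 v with hF2def
  set G1 : Set (Set T) := cone G0 u with hG1def
  set G2 : Set (Set T) := cone G0 v with hG2def
  have hG1U : ¬ G1.Countable := by
    refine not_countable_mono ?_ (not_countable_diff hfatu (meets_countable hGd hJc))
    rintro b ⟨⟨hbG, x, hx, hux⟩, hbJ⟩
    exact ⟨⟨hbG, hbJ⟩, x, hx, hux⟩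
  have hG2U : ¬ G2.Countable := by
    refine not_countable_mono ?_ (not_countable_diff hfatv (meets_countable hGd hJc))
    rintro b ⟨⟨hbG, x, hx, hvx⟩, hbJ⟩
    exact ⟨⟨hbG, hbJ⟩, x, hx, hvx⟩
  -- generic case: the F-cone of w is countable
  have caseI : ∀ w : T, ¬ (cone G0 w).Countable → (cone F0 w).Countable →
      (∀ r ∈ R', ¬ r ≤ w ∧ ¬ w ≤ r) →
      (∀ a ∈ F0, ∀ x ∈ a, ¬ x ≤ w) → (∀ b ∈ G0, ∀ y ∈ b, ¬ y ≤ w) → False := by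
    intro w hGw hFw hIw hthFw hthGw
    set X : Set (Set T) := F0 \ cone F0 w with hXdef
    have hXU : ¬ X.Countable := not_countable_diff hF0U hFw
    have hXsubF : X ⊆ F := fun a ha => hF0sub ha.1
    have hXnocone : ∀ a ∈ X, ∀ x ∈ a, ¬ w < x := by
      rintro a ⟨ha0, hac⟩ x hx hwx
      exact hac ⟨ha0, x, hx, hwx⟩
    have hkey : ∀ a ∈ X, ∀ b ∈ G0, ∀ x ∈ a, ∀ y ∈ b, (x ≤ y ∨ y ≤ x) → ¬ w < y := by
      intro a ha b hb x hx y hy hcomp hwy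
      exact link_avoid hT hwy (Or.symm hcomp) (hthFw a ha.1 x hx) (hXnocone a ha x hx)
    by_cases hE : ∃ b ∈ cone G0 w, red w b = ∅
    · obtain ⟨b, hb, hEb⟩ := hE
      obtain ⟨a, ha⟩ := nonempty_of_not_countable hXU
      obtain ⟨x, hx, y, hy, hcomp⟩ := hLink a (hXsubF ha) b (hG0sub hb.1)
      have hwy : w < y := by
        by_contra hwy
        exact (Set.eq_empty_iff_forall_notMem.mp hEb y) ⟨hy, hwy⟩
      exact hkey a ha b hb.1 x hx y hy hcomp hwy
    · push_neg at hE
      have hEne : ∀ b ∈ cone G0 w, (red w b).Nonempty := hE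
      set Y : Set (Set T) := red w '' cone G0 w with hYdef
      have hinj : Set.InjOn (red w) (cone G0 w) := by
        intro b1 h1 b2 h2 hEq
        by_contra hne'
        have hdis := hGd (hG0sub h1.1) (hG0sub h2.1) hne'
        obtain ⟨z, hz⟩ := hEne b1 h1
        exact Set.disjoint_left.mp hdis (red_subset w b1 hz) (red_subset w b2 (hEq ▸ hz))
      refine CALL p (q - 1) R' X Y ?_ hR'pair (hFd.mono hXsubF) ?_ ?_ ?_ ?_ ?_ ?_ ?_ ?_ hXU ?_ ?_
      · exact mu_shrink (by omega) hks
      · exact pairwise_image (hGd.mono (fun b hb => hG0sub hb.1)) (fun b _ => red_subset w b) hEne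
      · rintro a ha b' ⟨b, hb, rfl⟩
        exact Set.disjoint_of_subset_right (red_subset w b) (hFG a (hXsubF ha) b (hG0sub hb.1))
      · rintro c (hc | ⟨b, hb, rfl⟩)
        · exact hfin c (Or.inl (hXsubF hc))
        · exact (hfin b (Or.inr (hG0sub hb.1))).subset (red_subset w b)
      · rintro c (hc | ⟨b, hb, rfl⟩)
        · exact hne c (Or.inl (hXsubF hc))
        · exact hEne b hb
      · exact fun a ha => hcardF a (hXsubF ha)
      · rintro b' ⟨b, hb, rfl⟩
        have hss : red w b ⊂ b := by
          refine Set.ssubset_iff_subset_ne.mpr ⟨red_subset w b, fun hEq => ?_⟩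
          obtain ⟨x, hx, hwx⟩ := hb.2
          exact ((hEq.symm ▸ hx : x ∈ red w b)).2 hwx
        have h1 := Set.ncard_lt_ncard hss (hfin b (Or.inr (hG0sub hb.1)))
        have h2 := hcardG b (hG0sub hb.1)
        omega
      · rintro c (hc | ⟨b, hb, rfl⟩) r hr
        · exact hα c (Or.inl (hXsubF hc)) r (hR'sub hr)
        · obtain ⟨x, hx, hrx⟩ := hα b (Or.inr (hG0sub hb.1)) r (hR'sub hr)
          refine ⟨x, ⟨hx, ?_⟩, hrx⟩
          intro hwx
          exact no_two_cones hT (hIw r hr).1 (hIw r hr).2 hrx hwx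
      · rintro c (hc | ⟨b, hb, rfl⟩) x hx r hr
        · exact hβ c (Or.inl (hXsubF hc)) x hx r (hR'sub hr)
        · exact hβ b (Or.inr (hG0sub hb.1)) x (red_subset w b hx) r (hR'sub hr)
      · exact unc_image hGw hinj
      · rintro a ha b' ⟨b, hb, rfl⟩
        obtain ⟨x, hx, y, hy, hcomp⟩ := hLink a (hXsubF ha) b (hG0sub hb.1)
        exact ⟨x, hx, y, ⟨hy, hkey a ha b hb.1 x hx y hy hcomp⟩, hcomp⟩
  by_cases hF1c : F1.Countable
  · exact caseI u hG1U hF1c hIncompU (fun a ha x hx => (hthinF a ha x hx).1)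
      (fun b hb y hy => (hthinG b hb y hy).1)
  by_cases hF2c : F2.Countable
  · exact caseI v hG2U hF2c hIncompV (fun a ha x hx => (hthinF a ha x hx).2)
      (fun b hb y hy => (hthinG b hb y hy).2)
  -- both F1 and F2 are uncountable now
  have hF1sub : F1 ⊆ F := fun a ha => hF0sub ha.1
  have hF2sub : F2 ⊆ F := fun a ha => hF0sub ha.1
  have hG1sub : G1 ⊆ G := fun b hb => hG0sub hb.1
  have hG2sub : G2 ⊆ G := fun b hb => hG0sub hb.1
  have hunotR : u ∉ R := by
    intro h
    obtain ⟨a, ha, hua⟩ := hu.1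
    exact hβ a (Or.inl ha) u hua u h le_rfl
  have hvnotR : v ∉ R := by
    intro h
    obtain ⟨a, ha, hva⟩ := hv.1
    exact hβ a (Or.inl ha) v hva v h le_rfl
  by_cases hf1 : (F1 \ F2).Countable
  · -- F1 ∩ F2 is uncountable
    have hF12U : ¬ (F1 ∩ F2).Countable := by
      refine not_countable_mono ?_ (not_countable_diff hF1c hf1)
      rintro a ⟨ha1, had⟩
      have ha2 : a ∈ F2 := by
        by_contra h
        exact had ⟨ha1, h⟩
      exact ⟨ha1, ha2⟩
    by_cases hg1 : (G1 \ G2).Countable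
    · -- concentration case: both sides concentrate over u and v
      have hG12U : ¬ (G1 ∩ G2).Countable := by
        refine not_countable_mono ?_ (not_countable_diff hG1U hg1)
        rintro b ⟨hb1, hbd⟩
        have hb2 : b ∈ G2 := by
          by_contra h
          exact hbd ⟨hb1, h⟩
        exact ⟨hb1, hb2⟩
      set R'' : Finset T := insert u (insert v R') with hR''def
      have hvR' : v ∉ R' := fun h => hvnotR (hR'sub h)
      have huvR' : u ∉ insert v R' := by
        simp only [Finset.mem_insert]
        rintro (h | h)
        · exact huvne h
        · exact hunotR (hR'sub h)
      have hcardlt : R.card < R''.card := by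
        have hsplit := Finset.card_filter_add_card_filter_not
          (s := R) (p := fun r => (r < u ∨ r < v))
        have hrem : (R.filter (fun r => (r < u ∨ r < v))).card ≤ 1 := by
          refine Finset.card_le_one.mpr ?_
          intro r hr r' hr'
          rw [Finset.mem_filter] at hr hr'
          exact hsame r hr.1 r' hr'.1 hr.2 hr'.2
        have hR'card : (R.filter (fun r => ¬ (r < u ∨ r < v))).card = R'.card := by
          rw [hR'def]
        rw [hR''def, Finset.card_insert_of_notMem huvR',
          Finset.card_insert_of_notMem hvR']
        omega
      have hR''pair : ∀ r ∈ R'', ∀ r' ∈ R'', r ≠ r' → ¬ r ≤ r' ∧ ¬ r' ≤ r := by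
        intro r hr r' hr' hne'
        rw [hR''def] at hr hr'
        simp only [Finset.mem_insert] at hr hr'
        rcases hr with rfl | rfl | hr <;> rcases hr' with rfl | rfl | hr'
        · exact absurd rfl hne'
        · exact ⟨huv1, huv2⟩
        · exact ⟨(hIncompU r' hr').2, (hIncompU r' hr').1⟩
        · exact ⟨huv2, huv1⟩
        · exact absurd rfl hne'
        · exact ⟨(hIncompV r' hr').2, (hIncompV r' hr').1⟩
        · exact ⟨(hIncompU r hr).1, (hIncompU r hr).2⟩
        · exact ⟨(hIncompV r hr).1, (hIncompV r hr).2⟩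
        · exact hR'pair r hr r' hr' hne'
      have hα'' : ∀ c ∈ (F1 ∩ F2) ∪ (G1 ∩ G2), ∀ r ∈ R'', ∃ x ∈ c, r < x := by
        intro c hc r hr
        rw [hR''def] at hr
        simp only [Finset.mem_insert] at hr
        rcases hr with rfl | rfl | hr
        · rcases hc with hc | hc
          · exact hc.1.2
          · exact hc.1.2
        · rcases hc with hc | hc
          · exact hc.2.2
          · exact hc.2.2
        · rcases hc with hc | hc
          · exact hα c (Or.inl (hF1sub hc.1)) r (hR'sub hr)
          · exact hα c (Or.inr (hG1sub hc.1)) r (hR'sub hr)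
      refine CALL p q R'' (F1 ∩ F2) (G1 ∩ G2) ?_ hR''pair
        (hFd.mono (fun a ha => hF1sub ha.1)) (hGd.mono (fun b hb => hG1sub hb.1))
        ?_ ?_ ?_ ?_ ?_ hα'' ?_ hF12U hG12U ?_
      · -- measure
        obtain ⟨a, ha⟩ := nonempty_of_not_countable hF12U
        have hcard'' : R''.card ≤ p + q := by
          have h1 := card_roots_le hT hR''pair (hfin a (Or.inl (hF1sub ha.1)))
            (fun r hr => hα'' a (Or.inl ha) r hr)
          have h2 := hcardF a (hF1sub ha.1)
          omega
        exact mu_conc hcardlt hcard'' (by omega)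
      · intro a ha b hb
        exact hFG a (hF1sub ha.1) b (hG1sub hb.1)
      · rintro c (hc | hc)
        · exact hfin c (Or.inl (hF1sub hc.1))
        · exact hfin c (Or.inr (hG1sub hc.1))
      · rintro c (hc | hc)
        · exact hne c (Or.inl (hF1sub hc.1))
        · exact hne c (Or.inr (hG1sub hc.1))
      · exact fun a ha => hcardF a (hF1sub ha.1)
      · exact fun b hb => hcardG b (hG1sub hb.1)
      · rintro c (hc | hc) x hx r hr
        · rw [hR''def] at hr
          simp only [Finset.mem_insert] at hr
          rcases hr with rfl | rfl | hr
          · exact (hthinF c hc.1.1 x hx).1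
          · exact (hthinF c hc.1.1 x hx).2
          · exact hβ c (Or.inl (hF1sub hc.1)) x hx r (hR'sub hr)
        · rw [hR''def] at hr
          simp only [Finset.mem_insert] at hr
          rcases hr with rfl | rfl | hr
          · exact (hthinG c hc.1.1 x hx).1
          · exact (hthinG c hc.1.1 x hx).2
          · exact hβ c (Or.inr (hG1sub hc.1)) x hx r (hR'sub hr)
      · intro a ha b hb
        exact hLink a (hF1sub ha.1) b (hG1sub hb.1)
    · -- leaf B2 : reduce F1 ∩ F2 by v, pair with G1 \ G2
      have hkeyB2 : ∀ a ∈ F0, ∀ b ∈ G1 \ G2, ∀ x ∈ a, ∀ y ∈ b,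
          (x ≤ y ∨ y ≤ x) → ¬ v < x := by
        intro a ha b hb x hx y hy hcomp hvx
        refine link_avoid hT hvx hcomp ((hthinG b hb.1.1 y hy).2) ?_
        intro hvy
        exact hb.2 ⟨hb.1.1, y, hy, hvy⟩
      by_cases hEF : ∃ a ∈ F1 ∩ F2, red v a = ∅
      · obtain ⟨a, ha, hEa⟩ := hEF
        obtain ⟨b, hb⟩ := nonempty_of_not_countable hg1
        obtain ⟨x, hx, y, hy, hcomp⟩ := hLink a (hF1sub ha.1) b (hG1sub hb.1)
        have hvx : v < x := by
          by_contra hvx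
          exact (Set.eq_empty_iff_forall_notMem.mp hEa x) ⟨hx, hvx⟩
        exact hkeyB2 a ha.1.1 b hb x hx y hy hcomp hvx
      · push_neg at hEF
        have hinj : Set.InjOn (red v) (F1 ∩ F2) := by
          intro a1 h1 a2 h2 hEq
          by_contra hne'
          have hdis := hFd (hF1sub h1.1) (hF1sub h2.1) hne'
          obtain ⟨z, hz⟩ := hEF a1 h1
          exact Set.disjoint_left.mp hdis (red_subset v a1 hz) (red_subset v a2 (hEq ▸ hz))
        refine CALL (p - 1) q R' (red v '' (F1 ∩ F2)) (G1 \ G2) ?_ hR'pair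
          ?_ (hGd.mono (fun b hb => hG1sub hb.1)) ?_ ?_ ?_ ?_ ?_ ?_ ?_
          (unc_image hF12U hinj) hg1 ?_
        · exact mu_shrink (by omega) hks
        · exact pairwise_image (hFd.mono (fun a ha => hF1sub ha.1))
            (fun a _ => red_subset v a) hEF
        · rintro a' ⟨a, ha, rfl⟩ b hb
          exact Set.disjoint_of_subset_left (red_subset v a)
            (hFG a (hF1sub ha.1) b (hG1sub hb.1))
        · rintro c (⟨a, ha, rfl⟩ | hc)
          · exact (hfin a (Or.inl (hF1sub ha.1))).subset (red_subset v a)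
          · exact hfin c (Or.inr (hG1sub hc.1))
        · rintro c (⟨a, ha, rfl⟩ | hc)
          · exact hEF a ha
          · exact hne c (Or.inr (hG1sub hc.1))
        · rintro a' ⟨a, ha, rfl⟩
          have hss : red v a ⊂ a := by
            refine Set.ssubset_iff_subset_ne.mpr ⟨red_subset v a, fun hEq => ?_⟩
            obtain ⟨x, hx, hvx⟩ := ha.2.2
            exact ((hEq.symm ▸ hx : x ∈ red v a)).2 hvx
          have h1 := Set.ncard_lt_ncard hss (hfin a (Or.inl (hF1sub ha.1)))
          have h2 := hcardF a (hF1sub ha.1)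
          omega
        · exact fun b hb => hcardG b (hG1sub hb.1)
        · rintro c (⟨a, ha, rfl⟩ | hc) r hr
          · obtain ⟨x, hx, hrx⟩ := hα a (Or.inl (hF1sub ha.1)) r (hR'sub hr)
            refine ⟨x, ⟨hx, ?_⟩, hrx⟩
            intro hvx
            exact no_two_cones hT (hIncompV r hr).1 (hIncompV r hr).2 hrx hvx
          · exact hα c (Or.inr (hG1sub hc.1)) r (hR'sub hr)
        · rintro c (⟨a, ha, rfl⟩ | hc) x hx r hr
          · exact hβ a (Or.inl (hF1sub ha.1)) x (red_subset v a hx) r (hR'sub hr)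
          · exact hβ c (Or.inr (hG1sub hc.1)) x hx r (hR'sub hr)
        · rintro a' ⟨a, ha, rfl⟩ b hb
          obtain ⟨x, hx, y, hy, hcomp⟩ := hLink a (hF1sub ha.1) b (hG1sub hb.1)
          exact ⟨x, ⟨hx, hkeyB2 a ha.1.1 b hb x hx y hy hcomp⟩, y, hy, hcomp⟩
  · by_cases hg2 : (G2 \ G1).Countable
    · -- leaf B1 : pair F1 \ F2 with (G1 ∩ G2) reduced by v
      have hG12U : ¬ (G1 ∩ G2).Countable := by
        refine not_countable_mono ?_ (not_countable_diff hG2U hg2)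
        rintro b ⟨hb2, hbd⟩
        have hb1 : b ∈ G1 := by
          by_contra h
          exact hbd ⟨hb2, h⟩
        exact ⟨hb1, hb2⟩
      have hkeyB1 : ∀ a ∈ F1 \ F2, ∀ b ∈ G0, ∀ x ∈ a, ∀ y ∈ b,
          (x ≤ y ∨ y ≤ x) → ¬ v < y := by
        intro a ha b hb x hx y hy hcomp hvy
        refine link_avoid hT hvy (Or.symm hcomp) ((hthinF a ha.1.1 x hx).2) ?_
        intro hvx
        exact ha.2 ⟨ha.1.1, x, hx, hvx⟩
      by_cases hEG : ∃ b ∈ G1 ∩ G2, red v b = ∅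
      · obtain ⟨b, hb, hEb⟩ := hEG
        obtain ⟨a, ha⟩ := nonempty_of_not_countable hf1
        obtain ⟨x, hx, y, hy, hcomp⟩ := hLink a (hF1sub ha.1) b (hG1sub hb.1)
        have hvy : v < y := by
          by_contra hvy
          exact (Set.eq_empty_iff_forall_notMem.mp hEb y) ⟨hy, hvy⟩
        exact hkeyB1 a ha b hb.1.1 x hx y hy hcomp hvy
      · push_neg at hEG
        have hinj : Set.InjOn (red v) (G1 ∩ G2) := by
          intro b1 h1 b2 h2 hEq
          by_contra hne'
          have hdis := hGd (hG1sub h1.1) (hG1sub h2.1) hne'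
          obtain ⟨z, hz⟩ := hEG b1 h1
          exact Set.disjoint_left.mp hdis (red_subset v b1 hz) (red_subset v b2 (hEq ▸ hz))
        refine CALL p (q - 1) R' (F1 \ F2) (red v '' (G1 ∩ G2)) ?_ hR'pair
          (hFd.mono (fun a ha => hF1sub ha.1)) ?_ ?_ ?_ ?_ ?_ ?_ ?_ ?_
          hf1 (unc_image hG12U hinj) ?_
        · exact mu_shrink (by omega) hks
        · exact pairwise_image (hGd.mono (fun b hb => hG1sub hb.1))
            (fun b _ => red_subset v b) hEG
        · rintro a ha b' ⟨b, hb, rfl⟩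
          exact Set.disjoint_of_subset_right (red_subset v b)
            (hFG a (hF1sub ha.1) b (hG1sub hb.1))
        · rintro c (hc | ⟨b, hb, rfl⟩)
          · exact hfin c (Or.inl (hF1sub hc.1))
          · exact (hfin b (Or.inr (hG1sub hb.1))).subset (red_subset v b)
        · rintro c (hc | ⟨b, hb, rfl⟩)
          · exact hne c (Or.inl (hF1sub hc.1))
          · exact hEG b hb
        · exact fun a ha => hcardF a (hF1sub ha.1)
        · rintro b' ⟨b, hb, rfl⟩
          have hss : red v b ⊂ b := by
            refine Set.ssubset_iff_subset_ne.mpr ⟨red_subset v b, fun hEq => ?_⟩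
            obtain ⟨y, hy, hvy⟩ := hb.2.2
            exact ((hEq.symm ▸ hy : y ∈ red v b)).2 hvy
          have h1 := Set.ncard_lt_ncard hss (hfin b (Or.inr (hG1sub hb.1)))
          have h2 := hcardG b (hG1sub hb.1)
          omega
        · rintro c (hc | ⟨b, hb, rfl⟩) r hr
          · exact hα c (Or.inl (hF1sub hc.1)) r (hR'sub hr)
          · obtain ⟨y, hy, hry⟩ := hα b (Or.inr (hG1sub hb.1)) r (hR'sub hr)
            refine ⟨y, ⟨hy, ?_⟩, hry⟩
            intro hvy
            exact no_two_cones hT (hIncompV r hr).1 (hIncompV r hr).2 hry hvy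
        · rintro c (hc | ⟨b, hb, rfl⟩) x hx r hr
          · exact hβ c (Or.inl (hF1sub hc.1)) x hx r (hR'sub hr)
          · exact hβ b (Or.inr (hG1sub hb.1)) x (red_subset v b hx) r (hR'sub hr)
        · rintro a ha b' ⟨b, hb, rfl⟩
          obtain ⟨x, hx, y, hy, hcomp⟩ := hLink a (hF1sub ha.1) b (hG1sub hb.1)
          exact ⟨x, hx, y, ⟨hy, hkeyB1 a ha b hb.1.1 x hx y hy hcomp⟩, hcomp⟩
    · -- leaf A : reduce F1 \ F2 by u and G2 \ G1 by v
      have hkeyA : ∀ a ∈ F1 \ F2, ∀ b ∈ G2 \ G1, ∀ x ∈ a, ∀ y ∈ b,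
          (x ≤ y ∨ y ≤ x) → ¬ u < x ∧ ¬ v < y := by
        intro a ha b hb x hx y hy hcomp
        constructor
        · intro hux
          refine link_avoid hT hux hcomp ((hthinG b hb.1.1 y hy).1) ?_
          intro huy
          exact hb.2 ⟨hb.1.1, y, hy, huy⟩
        · intro hvy
          refine link_avoid hT hvy (Or.symm hcomp) ((hthinF a ha.1.1 x hx).2) ?_
          intro hvx
          exact ha.2 ⟨ha.1.1, x, hx, hvx⟩
      by_cases hEF : ∃ a ∈ F1 \ F2, red u a = ∅
      · obtain ⟨a, ha, hEa⟩ := hEF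
        obtain ⟨b, hb⟩ := nonempty_of_not_countable hg2
        obtain ⟨x, hx, y, hy, hcomp⟩ := hLink a (hF1sub ha.1) b (hG2sub hb.1)
        have hux : u < x := by
          by_contra hux
          exact (Set.eq_empty_iff_forall_notMem.mp hEa x) ⟨hx, hux⟩
        exact (hkeyA a ha b hb x hx y hy hcomp).1 hux
      by_cases hEG : ∃ b ∈ G2 \ G1, red v b = ∅
      · obtain ⟨b, hb, hEb⟩ := hEG
        obtain ⟨a, ha⟩ := nonempty_of_not_countable hf1
        obtain ⟨x, hx, y, hy, hcomp⟩ := hLink a (hF1sub ha.1) b (hG2sub hb.1)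
        have hvy : v < y := by
          by_contra hvy
          exact (Set.eq_empty_iff_forall_notMem.mp hEb y) ⟨hy, hvy⟩
        exact (hkeyA a ha b hb x hx y hy hcomp).2 hvy
      push_neg at hEF hEG
      have hinjF : Set.InjOn (red u) (F1 \ F2) := by
        intro a1 h1 a2 h2 hEq
        by_contra hne'
        have hdis := hFd (hF1sub h1.1) (hF1sub h2.1) hne'
        obtain ⟨z, hz⟩ := hEF a1 h1
        exact Set.disjoint_left.mp hdis (red_subset u a1 hz) (red_subset u a2 (hEq ▸ hz))
      have hinjG : Set.InjOn (red v) (G2 \ G1) := by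
        intro b1 h1 b2 h2 hEq
        by_contra hne'
        have hdis := hGd (hG2sub h1.1) (hG2sub h2.1) hne'
        obtain ⟨z, hz⟩ := hEG b1 h1
        exact Set.disjoint_left.mp hdis (red_subset v b1 hz) (red_subset v b2 (hEq ▸ hz))
      refine CALL (p - 1) (q - 1) R' (red u '' (F1 \ F2)) (red v '' (G2 \ G1)) ?_ hR'pair
        ?_ ?_ ?_ ?_ ?_ ?_ ?_ ?_ ?_
        (unc_image hf1 hinjF) (unc_image hg2 hinjG) ?_
      · exact mu_shrink (by omega) hks
      · exact pairwise_image (hFd.mono (fun a ha => hF1sub ha.1))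
          (fun a _ => red_subset u a) hEF
      · exact pairwise_image (hGd.mono (fun b hb => hG2sub hb.1))
          (fun b _ => red_subset v b) hEG
      · rintro a' ⟨a, ha, rfl⟩ b' ⟨b, hb, rfl⟩
        exact Set.disjoint_of_subset (red_subset u a) (red_subset v b)
          (hFG a (hF1sub ha.1) b (hG2sub hb.1))
      · rintro c (⟨a, ha, rfl⟩ | ⟨b, hb, rfl⟩)
        · exact (hfin a (Or.inl (hF1sub ha.1))).subset (red_subset u a)
        · exact (hfin b (Or.inr (hG2sub hb.1))).subset (red_subset v b)
      · rintro c (⟨a, ha, rfl⟩ | ⟨b, hb, rfl⟩)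
        · exact hEF a ha
        · exact hEG b hb
      · rintro a' ⟨a, ha, rfl⟩
        have hss : red u a ⊂ a := by
          refine Set.ssubset_iff_subset_ne.mpr ⟨red_subset u a, fun hEq => ?_⟩
          obtain ⟨x, hx, hux⟩ := ha.1.2
          exact ((hEq.symm ▸ hx : x ∈ red u a)).2 hux
        have h1 := Set.ncard_lt_ncard hss (hfin a (Or.inl (hF1sub ha.1)))
        have h2 := hcardF a (hF1sub ha.1)
        omega
      · rintro b' ⟨b, hb, rfl⟩
        have hss : red v b ⊂ b := by
          refine Set.ssubset_iff_subset_ne.mpr ⟨red_subset v b, fun hEq => ?_⟩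
          obtain ⟨y, hy, hvy⟩ := hb.1.2
          exact ((hEq.symm ▸ hy : y ∈ red v b)).2 hvy
        have h1 := Set.ncard_lt_ncard hss (hfin b (Or.inr (hG2sub hb.1)))
        have h2 := hcardG b (hG2sub hb.1)
        omega
      · rintro c (⟨a, ha, rfl⟩ | ⟨b, hb, rfl⟩) r hr
        · obtain ⟨x, hx, hrx⟩ := hα a (Or.inl (hF1sub ha.1)) r (hR'sub hr)
          refine ⟨x, ⟨hx, ?_⟩, hrx⟩
          intro hux
          exact no_two_cones hT (hIncompU r hr).1 (hIncompU r hr).2 hrx hux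
        · obtain ⟨y, hy, hry⟩ := hα b (Or.inr (hG2sub hb.1)) r (hR'sub hr)
          refine ⟨y, ⟨hy, ?_⟩, hry⟩
          intro hvy
          exact no_two_cones hT (hIncompV r hr).1 (hIncompV r hr).2 hry hvy
      · rintro c (⟨a, ha, rfl⟩ | ⟨b, hb, rfl⟩) x hx r hr
        · exact hβ a (Or.inl (hF1sub ha.1)) x (red_subset u a hx) r (hR'sub hr)
        · exact hβ b (Or.inr (hG2sub hb.1)) x (red_subset v b hx) r (hR'sub hr)
      · rintro a' ⟨a, ha, rfl⟩ b' ⟨b, hb, rfl⟩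
        obtain ⟨x, hx, y, hy, hcomp⟩ := hLink a (hF1sub ha.1) b (hG2sub hb.1)
        exact ⟨x, ⟨hx, (hkeyA a ha b hb x hx y hy hcomp).1⟩,
          y, ⟨hy, (hkeyA a ha b hb x hx y hy hcomp).2⟩, hcomp⟩


end Stmt19

theorem stmt_19 (T : Type u) [PartialOrder T] (hT : IsTree T)
    (hchain : ∀ C : Set T, IsChain (· ≤ ·) C → C.Countable)
    (𝒜 : Set (Set T)) (hunc : ¬ 𝒜.Countable)
    (hne : ∀ a ∈ 𝒜, a.Nonempty) (hfin : ∀ a ∈ 𝒜, a.Finite)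
    (hdisj : ∀ a ∈ 𝒜, ∀ b ∈ 𝒜, a ≠ b → Disjoint a b) :
    ∃ a ∈ 𝒜, ∃ b ∈ 𝒜, a ≠ b ∧
      ∀ x ∈ a, ∀ y ∈ b, ¬ x ≤ y ∧ ¬ y ≤ x := by
  classical
  by_contra hcon
  push_neg at hcon
  -- hcon : ∀ a ∈ 𝒜, ∀ b ∈ 𝒜, a ≠ b → ∃ x ∈ a, ∃ y ∈ b, (¬ x ≤ y → y ≤ x)
  have hA : ∃ n : ℕ, ¬ {a ∈ 𝒜 | a.ncard = n}.Countable := by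
    by_contra h
    push_neg at h
    apply hunc
    have hsub : 𝒜 ⊆ ⋃ n : ℕ, {a ∈ 𝒜 | a.ncard = n} :=
      fun a ha => Set.mem_iUnion.mpr ⟨a.ncard, ha, rfl⟩
    exact (Set.countable_iUnion h).mono hsub
  obtain ⟨n, hn⟩ := hA
  obtain ⟨F, G, hFsub, hGsub, hFGdisj, hUF, hUG⟩ := Stmt19.split hn
  have hFA : ∀ a ∈ F, a ∈ 𝒜 := fun a ha => (hFsub ha).1
  have hGA : ∀ b ∈ G, b ∈ 𝒜 := fun b hb => (hGsub hb).1
  refine Stmt19.core hT hchain ((n + n) * (n + n) + (n + n)) n n ∅ F G ?_ ?_ ?_ ?_ ?_ ?_ ?_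
    ?_ ?_ ?_ ?_ hUF hUG ?_
  · simp
  · simp
  · exact fun a ha b hb hab => hdisj a (hFA a ha) b (hFA b hb) hab
  · exact fun a ha b hb hab => hdisj a (hGA a ha) b (hGA b hb) hab
  · intro a ha b hb
    have hab : a ≠ b := by
      rintro rfl
      exact hFGdisj a ha hb
    exact hdisj a (hFA a ha) b (hGA b hb) hab
  · rintro a (ha | ha)
    · exact hfin a (hFA a ha)
    · exact hfin a (hGA a ha)
  · rintro a (ha | ha)
    · exact hne a (hFA a ha)
    · exact hne a (hGA a ha)
  · exact fun a ha => le_of_eq (hFsub ha).2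
  · exact fun b hb => le_of_eq (hGsub hb).2
  · exact fun a _ r hr => absurd hr (Finset.notMem_empty r)
  · exact fun a _ x _ r hr => absurd hr (Finset.notMem_empty r)
  · intro a ha b hb
    have hab : a ≠ b := by
      rintro rfl
      exact hFGdisj a ha hb
    obtain ⟨x, hx, y, hy, himp⟩ := hcon a (hFA a ha) b (hGA b hb) hab
    exact ⟨x, hx, y, hy, or_iff_not_imp_left.mpr himp⟩
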